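/- There exists a chiral partition of H, that is, a partition of the edge set of H into four perfect matchings such that each matching contains exactly one edge from each direction class D_i. -/

import Mathlib

open scoped Classical

noncomputable section

abbrev V4 := Fin 4 → ℝ

def cubeSet : Set V4 := {v | ∀ i, v i = 1 ∨ v i = -1}

abbrev CubeV := {v : V4 // v ∈ cubeSet}

/-- `v` and `w` differ in exactly the coordinate `i`. -/
def diffExactly {n : ℕ} (v w : Fin n → ℝ) (i : Fin n) : Prop := ∀ j, v j ≠ w j ↔ j = i

/-- `v` and `w` differ in exactly one coordinate. -/
def diffOne {n : ℕ} (v w : Fin n → ℝ) : Prop := ∃ i, diffExactly v w i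

instance antipodalSetoid : Setoid CubeV where
  r v w := (v : V4) = (w : V4) ∨ (v : V4) = -(w : V4)
  iseqv := by
    constructor
    · exact fun v => Or.inl rfl
    · rintro v w (h | h)
      · exact Or.inl h.symm
      · right; rw [h, neg_neg]
    · rintro u v w (h1 | h1) (h2 | h2)
      · exact Or.inl (h1.trans h2)
      · exact Or.inr (h1.trans h2)
      · right; rw [h1, h2]
      · left; rw [h1, h2, neg_neg]

/-- vertices of the hemi-hypercube: antipodal pairs of vertices of the hypercube -/
def HVert := Quotient antipodalSetoid

/-- the hemi-hypercube graph -/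
def H : SimpleGraph HVert where
  Adj x y := x ≠ y ∧ ∃ v w : CubeV, (⟦v⟧ : HVert) = x ∧ (⟦w⟧ : HVert) = y ∧
    diffOne (v : V4) (w : V4)
  symm := by
    constructor; rintro x y ⟨hxy, v, w, hv, hw, i, hi⟩
    exact ⟨hxy.symm, w, v, hw, hv, i, fun j => by rw [← hi j]; exact ne_comm⟩
  loopless := by constructor; rintro x ⟨h, -⟩; exact h rfl

/-- the direction class `D i` -/
def D (i : Fin 4) : Set (Sym2 HVert) :=
  {e | e ∈ H.edgeSet ∧ ∃ v w : CubeV,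
    e = s((⟦v⟧ : HVert), (⟦w⟧ : HVert)) ∧ diffExactly (v : V4) (w : V4) i}

/-- a set of edges of `G` is a perfect matching -/
def IsPM {V : Type*} (G : SimpleGraph V) (M : Set (Sym2 V)) : Prop :=
  M ⊆ G.edgeSet ∧ ∀ v : V, ∃! e : Sym2 V, e ∈ M ∧ v ∈ e

/-- a chiral partition of `H`: a partition of the edge set of `H` into four perfect
matchings, each containing exactly one edge from each direction class. -/
def IsChiralPartition (M : Fin 4 → Set (Sym2 HVert)) : Prop :=
  (∀ k, IsPM H (M k)) ∧
  (∀ e ∈ H.edgeSet, ∃! k, e ∈ M k) ∧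
  (∀ k i, ∃! e, e ∈ M k ∧ e ∈ D i)

/-! ### Auxiliary development -/

abbrev B3 := Bool × Bool × Bool

def bv (b : Fin 4 → Bool) : V4 := fun i => if b i then 1 else -1

lemma bv_mem (b : Fin 4 → Bool) : bv b ∈ cubeSet := fun i => by
  by_cases h : b i <;> simp [bv, h]

def bc (b : Fin 4 → Bool) : CubeV := ⟨bv b, bv_mem b⟩

def hv (b : Fin 4 → Bool) : HVert := ⟦bc b⟧

def not4 (b : Fin 4 → Bool) : Fin 4 → Bool := fun j => !(b j)

def flp (i : Fin 4) (b : Fin 4 → Bool) : Fin 4 → Bool := fun j => if j = i then !(b j) else b j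

def red (b : Fin 4 → Bool) : B3 :=
  if b 0 then (b 1, b 2, b 3) else (!(b 1), !(b 2), !(b 3))

def partner3 (i : Fin 4) (x : B3) : B3 :=
  if i = 0 then (!x.1, !x.2.1, !x.2.2)
  else if i = 1 then (!x.1, x.2.1, x.2.2)
  else if i = 2 then (x.1, !x.2.1, x.2.2)
  else (x.1, x.2.1, !x.2.2)

def DIR (k : Fin 4) (x : B3) : Fin 4 :=
  if k = 0 then
    match x with
    | (false,false,false) => 0 | (true,true,true) => 0
    | (false,true,true) => 2 | (false,false,true) => 2
    | (true,false,true) => 3 | (true,false,false) => 3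
    | (true,true,false) => 1 | (false,true,false) => 1
  else if k = 1 then
    match x with
    | (false,false,false) => 1 | (true,false,false) => 1
    | (false,true,true) => 3 | (false,true,false) => 3
    | (true,false,true) => 2 | (true,true,true) => 2
    | (true,true,false) => 0 | (false,false,true) => 0
  else if k = 2 then
    match x with
    | (false,false,false) => 2 | (false,true,false) => 2
    | (false,true,true) => 0 | (true,false,false) => 0
    | (true,false,true) => 1 | (false,false,true) => 1
    | (true,true,false) => 3 | (true,true,true) => 3
  else
    match x with
    | (false,false,false) => 3 | (false,false,true) => 3
    | (false,true,true) => 1 | (true,true,true) => 1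
    | (true,false,true) => 0 | (false,true,false) => 0
    | (true,true,false) => 2 | (true,false,false) => 2

-- decidable table facts
lemma D1 : ∀ (k : Fin 4) (x : B3), DIR k (partner3 (DIR k x) x) = DIR k x := by decide
lemma D2 : ∀ (k i : Fin 4) (x : B3), DIR k x = i → DIR k (partner3 i x) = i := by decide
lemma D3ex : ∀ (x : B3) (i : Fin 4), ∃ k, DIR k x = i := by decide
lemma D3u : ∀ (x : B3) (k k' : Fin 4), DIR k x = DIR k' x → k = k' := by decide
lemma D4 : ∀ (k i : Fin 4) (x y : B3), DIR k x = i → DIR k y = i →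
    y = x ∨ y = partner3 i x := by decide
lemma D5 : ∀ (k i : Fin 4), ∃ x, DIR k x = i := by decide
lemma finAux : ∀ i j : Fin 4, ∃ m : Fin 4, m ≠ i ∧ m ≠ j := by decide

def pk (k : Fin 4) (b : Fin 4 → Bool) : Fin 4 → Bool := flp (DIR k (red b)) b

def M (k : Fin 4) : Set (Sym2 HVert) := {e | ∃ b, e = s(hv b, hv (pk k b))}

/-! ### basic lemmas -/

lemma bv_inj {b c : Fin 4 → Bool} (h : bv b = bv c) : b = c := by
  funext j
  have := congrFun h j
  by_cases hb : b j <;> by_cases hc : c j <;> simp [bv, hb, hc] at this ⊢ <;> norm_num at this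

lemma bv_not4 (b : Fin 4 → Bool) : bv (not4 b) = -(bv b) := by
  funext j; by_cases h : b j <;> simp [bv, not4, h]

lemma hv_eq_iff {b c : Fin 4 → Bool} : hv b = hv c ↔ b = c ∨ b = not4 c := by
  constructor
  · intro h
    rcases Quotient.eq.mp h with h' | h'
    · exact Or.inl (bv_inj h')
    · right
      apply bv_inj
      rw [bv_not4]
      exact_mod_cast h'
  · rintro (rfl | rfl)
    · rfl
    · apply Quotient.sound
      right
      show bv (not4 c) = -(bv c)
      exact bv_not4 c

lemma hv_not4 (b : Fin 4 → Bool) : hv (not4 b) = hv b := hv_eq_iff.mpr (Or.inr rfl)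

lemma not4_not4 (b : Fin 4 → Bool) : not4 (not4 b) = b := by
  funext j; simp [not4]

lemma red_not4 (b : Fin 4 → Bool) : red (not4 b) = red b := by
  by_cases h : b 0 <;> simp [red, not4, h]

lemma red_eq' {b c : Fin 4 → Bool} (h : red b = red c) : b = c ∨ b = not4 c := by
  by_cases hb : b 0 <;> by_cases hc : c 0 <;> simp [red, hb, hc, Prod.ext_iff] at h
  · left; funext j; fin_cases j <;> simp [hb, hc, h.1, h.2.1, h.2.2]
  · right; funext j; fin_cases j <;> simp [not4, hb, hc, ← h.1, ← h.2.1, ← h.2.2]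
  · right; funext j; fin_cases j <;> simp [not4, hb, hc, h.1, h.2.1, h.2.2]
  · left; funext j; fin_cases j <;> simp [hb, hc, h.1, h.2.1, h.2.2]

lemma red_flp (i : Fin 4) (b : Fin 4 → Bool) : red (flp i b) = partner3 i (red b) := by
  fin_cases i <;> by_cases h : b 0 <;>
    simp [red, flp, partner3, h]

lemma flp_flp (i : Fin 4) (b : Fin 4 → Bool) : flp i (flp i b) = b := by
  funext j; by_cases h : j = i <;> simp [flp, h]

lemma flp_not4 (i : Fin 4) (b : Fin 4 → Bool) : flp i (not4 b) = not4 (flp i b) := by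
  funext j; by_cases h : j = i <;> simp [flp, not4, h]

lemma flp_ne_self (i : Fin 4) (b : Fin 4 → Bool) : flp i b ≠ b := by
  intro h
  have := congrFun h i
  simp [flp] at this

lemma flp_inj_dir {i j : Fin 4} {b : Fin 4 → Bool} (h : flp i b = flp j b) : i = j := by
  by_contra hne
  have := congrFun h i
  simp [flp, hne] at this

lemma flp_ne_flpnot (i j : Fin 4) (b : Fin 4 → Bool) : flp i b ≠ flp j (not4 b) := by
  intro h
  obtain ⟨m, hmi, hmj⟩ := finAux i j
  have := congrFun h m
  simp [flp, not4, hmi, hmj] at this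

lemma flp_ne_flpnot' (i j : Fin 4) (b : Fin 4 → Bool) : flp i (not4 b) ≠ flp j b :=
  fun h => flp_ne_flpnot j i b h.symm

lemma bv_ne_iff (b c : Fin 4 → Bool) (j : Fin 4) : bv b j ≠ bv c j ↔ b j ≠ c j := by
  by_cases hb : b j <;> by_cases hc : c j <;> simp [bv, hb, hc] <;> norm_num

lemma diffExactly_flp (i : Fin 4) (b : Fin 4 → Bool) :
    diffExactly (bv b) (bv (flp i b)) i := by
  intro j
  rw [bv_ne_iff]
  by_cases h : j = i <;> simp [flp, h]

lemma hv_ne_flp (i : Fin 4) (b : Fin 4 → Bool) : hv b ≠ hv (flp i b) := by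
  intro h
  rcases hv_eq_iff.mp h with h' | h'
  · exact flp_ne_self i b h'.symm
  · obtain ⟨m, hmi, -⟩ := finAux i i
    have := congrFun h' m
    simp [flp, not4, hmi] at this

lemma adj_flp (i : Fin 4) (b : Fin 4 → Bool) : H.Adj (hv b) (hv (flp i b)) :=
  ⟨hv_ne_flp i b, bc b, bc (flp i b), rfl, rfl, i, diffExactly_flp i b⟩

lemma cubeV_eq_bc (v : CubeV) : ∃ b, bc b = v := by
  refine ⟨fun i => if v.val i = 1 then true else false, ?_⟩
  apply Subtype.ext
  funext i
  rcases v.2 i with h | h <;> simp [bc, bv, h]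
  norm_num

lemma hv_surj (x : HVert) : ∃ b, hv b = x := by
  induction x using Quotient.ind with
  | _ v =>
    obtain ⟨b, hb⟩ := cubeV_eq_bc v
    exact ⟨b, by rw [hv, hb]⟩

lemma diffExactly_to_flp {b c : Fin 4 → Bool} {i : Fin 4}
    (h : diffExactly (bv b) (bv c) i) : c = flp i b := by
  funext j
  have hj := (bv_ne_iff b c j).symm.trans (h j)
  by_cases hji : j = i
  · subst hji
    have := hj.mpr rfl
    simp [flp]
    cases hb : b j <;> cases hc : c j <;> simp_all
  · simp [flp, hji]
    by_contra hne
    exact hji (hj.mp (Ne.symm hne))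

lemma edge_char {e : Sym2 HVert} (he : e ∈ H.edgeSet) :
    ∃ b i, e = s(hv b, hv (flp i b)) := by
  induction e using Sym2.ind with
  | _ x y =>
    rw [SimpleGraph.mem_edgeSet] at he
    obtain ⟨-, v, w, hv1, hw1, i, hd⟩ := he
    obtain ⟨b, rfl⟩ := cubeV_eq_bc v
    obtain ⟨c, rfl⟩ := cubeV_eq_bc w
    have : (c : Fin 4 → Bool) = flp i b := diffExactly_to_flp hd
    subst this
    have hx : hv b = x := hv1
    have hy : hv (flp i b) = y := hw1
    rw [← hx, ← hy]
    exact ⟨b, i, rfl⟩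

lemma mem_D_flp (i : Fin 4) (b : Fin 4 → Bool) : s(hv b, hv (flp i b)) ∈ D i :=
  ⟨H.mem_edgeSet.mpr (adj_flp i b), bc b, bc (flp i b), rfl, diffExactly_flp i b⟩

lemma D_char {e : Sym2 HVert} {i : Fin 4} (he : e ∈ D i) :
    ∃ b, e = s(hv b, hv (flp i b)) := by
  obtain ⟨-, v, w, he', hd⟩ := he
  obtain ⟨b, rfl⟩ := cubeV_eq_bc v
  obtain ⟨c, rfl⟩ := cubeV_eq_bc w
  have : (c : Fin 4 → Bool) = flp i b := diffExactly_to_flp hd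
  subst this
  exact ⟨b, he'⟩

/-! ### pk lemmas -/

lemma red_pk (k : Fin 4) (b : Fin 4 → Bool) :
    red (pk k b) = partner3 (DIR k (red b)) (red b) := red_flp _ b

lemma DIR_red_pk (k : Fin 4) (b : Fin 4 → Bool) :
    DIR k (red (pk k b)) = DIR k (red b) := by
  rw [red_pk]; exact D1 k (red b)

lemma pk_pk (k : Fin 4) (b : Fin 4 → Bool) : pk k (pk k b) = b := by
  show flp (DIR k (red (pk k b))) (pk k b) = b
  rw [DIR_red_pk]
  exact flp_flp _ b

lemma pk_not4 (k : Fin 4) (b : Fin 4 → Bool) : pk k (not4 b) = not4 (pk k b) := by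
  show flp (DIR k (red (not4 b))) (not4 b) = _
  rw [red_not4]
  exact flp_not4 _ b

lemma hv_pk_cong {k : Fin 4} {b c : Fin 4 → Bool} (h : hv b = hv c) :
    hv (pk k b) = hv (pk k c) := by
  rcases hv_eq_iff.mp h with rfl | rfl
  · rfl
  · rw [pk_not4, hv_not4]

lemma red_eq_hv {b c : Fin 4 → Bool} (h : red b = red c) : hv b = hv c := by
  rcases red_eq' h with rfl | rfl
  · rfl
  · exact hv_not4 c

/-! ### the KEY lemmas -/

lemma flp_eq_dir {b c : Fin 4 → Bool} {i j : Fin 4} (hbc : hv b = hv c)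
    (hf : hv (flp i b) = hv (flp j c)) : i = j := by
  rcases hv_eq_iff.mp hbc with rfl | rfl <;> rcases hv_eq_iff.mp hf with h3 | h3
  · exact flp_inj_dir h3
  · rw [← flp_not4] at h3
    exact absurd h3 (flp_ne_flpnot i j b)
  · exact absurd h3 (flp_ne_flpnot' i j c)
  · rw [← flp_not4] at h3
    exact flp_inj_dir h3

lemma key {k i : Fin 4} {b c : Fin 4 → Bool}
    (h : s(hv b, hv (flp i b)) = s(hv c, hv (pk k c))) :
    DIR k (red b) = i ∧ DIR k (red c) = i := by
  have hpk : pk k c = flp (DIR k (red c)) c := rfl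
  rw [hpk, Sym2.eq_iff] at h
  have main : DIR k (red c) = i := by
    rcases h with ⟨h1, h2⟩ | ⟨h1, h2⟩
    · exact (flp_eq_dir h1 h2).symm
    · have hf : hv (flp i (flp i b)) = hv (flp (DIR k (red c)) c) := by
        rw [flp_flp]; exact h1
      exact (flp_eq_dir h2 hf).symm
  refine ⟨?_, main⟩
  rcases h with ⟨h1, -⟩ | ⟨h1, -⟩
  · rcases hv_eq_iff.mp h1 with rfl | rfl
    · exact main
    · rw [red_not4]; exact main
  · have hr : red b = red (flp (DIR k (red c)) c) := by
      rcases hv_eq_iff.mp h1 with rfl | rfl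
      · rfl
      · rw [red_not4]
    rw [hr, red_flp, main]
    exact D2 k i (red c) main

def emb (x : B3) : Fin 4 → Bool :=
  fun j => if j = 0 then true else if j = 1 then x.1 else if j = 2 then x.2.1 else x.2.2

lemma red_emb (x : B3) : red (emb x) = x := by
  simp [red, emb]

/-- there exists a chiral partition of `H`. -/
theorem stmt_6 : ∃ M : Fin 4 → Set (Sym2 HVert), IsChiralPartition M := by
  refine ⟨M, ?_, ?_, ?_⟩
  · -- each M k is a perfect matching
    intro k
    constructor
    · rintro e ⟨b, rfl⟩
      exact H.mem_edgeSet.mpr (adj_flp (DIR k (red b)) b)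
    · intro v
      obtain ⟨b, rfl⟩ := hv_surj v
      refine ⟨s(hv b, hv (pk k b)), ⟨⟨b, rfl⟩, Sym2.mem_mk_left _ _⟩, ?_⟩
      rintro e ⟨⟨c, rfl⟩, hm⟩
      rw [Sym2.mem_iff] at hm
      rcases hm with h | h
      · rw [← h, hv_pk_cong h.symm]
      · have h2 : hv (pk k b) = hv c := by rw [hv_pk_cong h, pk_pk]
        rw [← h2, ← h]
        exact Sym2.eq_swap
  · -- partition of the edge set
    intro e he
    obtain ⟨b, i, rfl⟩ := edge_char he
    obtain ⟨k, hk⟩ := D3ex (red b) i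
    have hpk : pk k b = flp i b := by
      show flp (DIR k (red b)) b = flp i b
      rw [hk]
    refine ⟨k, ⟨b, by rw [hpk]⟩, ?_⟩
    rintro k' ⟨c, hc⟩
    exact D3u (red b) k' k ((key hc).1.trans hk.symm)
  · -- exactly one edge in each direction class
    intro k i
    obtain ⟨x, hx⟩ := D5 k i
    have hb : DIR k (red (emb x)) = i := by rw [red_emb]; exact hx
    have hpk : pk k (emb x) = flp i (emb x) := by
      show flp (DIR k (red (emb x))) (emb x) = flp i (emb x)
      rw [hb]
    refine ⟨s(hv (emb x), hv (pk k (emb x))), ⟨⟨emb x, rfl⟩, ?_⟩, ?_⟩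
    · rw [hpk]
      exact mem_D_flp i (emb x)
    · rintro e' ⟨⟨c, rfl⟩, hD⟩
      obtain ⟨b', hb'⟩ := D_char hD
      have hcDIR : DIR k (red c) = i := (key hb'.symm).2
      rcases D4 k i (red (emb x)) (red c) hb hcDIR with hcc | hcc
      · have h := red_eq_hv hcc
        rw [← h, hv_pk_cong h.symm]
      · have h1 : hv c = hv (pk k (emb x)) := by
          apply red_eq_hv
          rw [hcc, red_pk, hb]
        rw [h1, hv_pk_cong h1, pk_pk]
        exact Sym2.eq_swap
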